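/- Every traceless skew-Hermitian 3×3 complex matrix B (an element of the Lie algebra su(3)) can be decomposed as B = b₁ + b₂ + b₃, where the matrices b₁, b₂, b₃ are skew-Hermitian, pairwise commute, and each satisfies b_i² = λ_i·𝟙 for some real scalar λ_i with λ_i ≤ 0. -/

import Mathlib

open Matrix

/-- Every traceless skew-Hermitian 3×3 complex matrix `B` (an element of
the Lie algebra su(3)) can be decomposed as `B = b₁ + b₂ + b₃`, where the `bᵢ` are
skew-Hermitian, pairwise commute, and each satisfies `bᵢ² = λᵢ • 𝟙` for some real
`λᵢ ≤ 0`. -/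
theorem invariant_decomposition_su3
    (B : Matrix (Fin 3) (Fin 3) ℂ) (hskew : Bᴴ = -B) (htr : B.trace = 0) :
    ∃ b : Fin 3 → Matrix (Fin 3) (Fin 3) ℂ,
      B = b 0 + b 1 + b 2 ∧
      (∀ i, (b i)ᴴ = -(b i)) ∧
      (∀ i j, b i * b j = b j * b i) ∧
      (∀ i, ∃ lam : ℝ, lam ≤ 0 ∧ (b i) ^ 2 = (lam : ℂ) • (1 : Matrix (Fin 3) (Fin 3) ℂ)) := by
  have hA : (Complex.I • B).IsHermitian := by
    unfold Matrix.IsHermitian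
    rw [conjTranspose_smul, hskew]
    simp [Complex.star_def, Complex.conj_I]
  set U : Matrix (Fin 3) (Fin 3) ℂ := (hA.eigenvectorUnitary : Matrix (Fin 3) (Fin 3) ℂ) with hU
  have hUU : star U * U = 1 := Unitary.coe_star_mul_self hA.eigenvectorUnitary
  have hUU' : U * star U = 1 := Unitary.coe_mul_star_self hA.eigenvectorUnitary
  have key : ∀ X Y : Matrix (Fin 3) (Fin 3) ℂ,
      (U * X * star U) * (U * Y * star U) = U * (X * Y) * star U := by
    intro X Y
    have h1 : star U * (U * Y * star U) = Y * star U := by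
      rw [← mul_assoc, ← mul_assoc, hUU, one_mul]
    calc (U * X * star U) * (U * Y * star U)
        = U * X * (star U * (U * Y * star U)) := by simp only [mul_assoc]
      _ = U * X * (Y * star U) := by rw [h1]
      _ = U * (X * Y) * star U := by simp only [mul_assoc]
  set t : Fin 3 → ℝ := hA.eigenvalues with ht
  set c : Fin 3 → ℝ := ![(t 0 + t 1)/2, (t 0 + t 2)/2, (t 1 + t 2)/2] with hc
  set p : Fin 3 → Fin 3 → ℝ := ![![1,1,-1], ![1,-1,1], ![-1,1,1]] with hp
  set d : Fin 3 → Matrix (Fin 3) (Fin 3) ℂ :=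
    fun k => (-Complex.I * (c k : ℂ)) • diagonal (fun j => ((p k j : ℝ) : ℂ)) with hd
  have hdiagstar : ∀ k, (diagonal (fun j => ((p k j : ℝ) : ℂ)))ᴴ
      = diagonal (fun j => ((p k j : ℝ) : ℂ)) := by
    intro k
    ext a b
    by_cases h : a = b
    · simp [h, conjTranspose_apply, diagonal_apply, Complex.star_def, Complex.conj_ofReal]
    · simp [conjTranspose_apply, diagonal_apply_ne, h, Ne.symm h]
  have hdH : ∀ k, (d k)ᴴ = -(d k) := by
    intro k
    rw [hd]
    simp only
    rw [conjTranspose_smul, hdiagstar k]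
    rw [show star (-Complex.I * (c k : ℂ)) = -(-Complex.I * (c k : ℂ)) by
      simp [Complex.star_def, Complex.conj_I]]
    rw [neg_smul]
  refine ⟨fun k => U * d k * star U, ?_, ?_, ?_, ?_⟩
  · have e0 : t 0 = c 0 + c 1 - c 2 := by simp [hc]; ring
    have e1 : t 1 = c 0 - c 1 + c 2 := by simp [hc]; ring
    have e2 : t 2 = - c 0 + c 1 + c 2 := by simp [hc]; ring
    have hdsum : d 0 + d 1 + d 2 = (-Complex.I) • diagonal (fun j => ((t j : ℝ) : ℂ)) := by
      ext i j
      fin_cases i <;> fin_cases j <;>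
        simp [hd, hp, diagonal_apply, e0, e1, e2] <;> push_cast <;> ring
    have hsp := hA.spectral_theorem
    calc B = (-Complex.I) • (Complex.I • B) := by rw [smul_smul]; simp
      _ = (-Complex.I) • (U * diagonal (RCLike.ofReal ∘ t) * star U) := by rw [hsp, Unitary.conjStarAlgAut_apply]
      _ = U * ((-Complex.I) • diagonal (fun j => ((t j : ℝ) : ℂ))) * star U := by
          rw [Matrix.mul_smul, Matrix.smul_mul]; rfl
      _ = U * (d 0 + d 1 + d 2) * star U := by rw [hdsum]
      _ = U * d 0 * star U + U * d 1 * star U + U * d 2 * star U := by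
          rw [mul_add, mul_add, add_mul, add_mul]
  · intro k
    show (U * d k * star U)ᴴ = -(U * d k * star U)
    rw [conjTranspose_mul, conjTranspose_mul, hdH]
    simp only [star_eq_conjTranspose, conjTranspose_conjTranspose, Matrix.mul_neg,
      Matrix.neg_mul, mul_assoc]
  · intro i j
    have hdd : d i * d j = d j * d i := by
      ext a b
      fin_cases a <;> fin_cases b <;>
        simp [hd, hp, Matrix.mul_apply, diagonal_apply, Fin.sum_univ_three] <;> ring
    show (U * d i * star U) * (U * d j * star U) = (U * d j * star U) * (U * d i * star U)
    rw [key, key, hdd]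
  · intro k
    refine ⟨-(c k)^2, neg_nonpos.mpr (sq_nonneg _), ?_⟩
    have hps : ∀ j, (p k j) * (p k j) = 1 := by
      intro j; fin_cases k <;> fin_cases j <;> norm_num [hp]
    have hdd : d k * d k = ((-(c k)^2 : ℝ) : ℂ) • 1 := by
      simp only [hd, Matrix.smul_mul, Matrix.mul_smul, diagonal_mul_diagonal, smul_smul]
      have h2 : (diagonal fun j => ((p k j : ℝ) : ℂ) * ((p k j : ℝ) : ℂ))
          = (1 : Matrix (Fin 3) (Fin 3) ℂ) := by
        ext a b
        by_cases h : a = b <;>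
          simp [h, diagonal_apply, Matrix.one_apply, ← Complex.ofReal_mul, hps]
      rw [h2]
      congr 1
      push_cast
      linear_combination ((c k : ℂ))^2 * Complex.I_sq
    show (U * d k * star U) ^ 2 = _
    rw [sq, key, hdd, Matrix.mul_smul, Matrix.smul_mul, mul_one, hUU']
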